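/- Let p be an odd prime and let f : ℤ → ℤ be a p-periodic function such that the vector (f(0), f(1), …, f(p−1)) is circular. Then the (p−1)-st finite difference ∂^{p−1} f takes all its values in pℤ, where ∂f(x) := f(x+1) − f(x). -/

import Mathlib

/-- A vector `v ∈ ℤ^p` (indexed by `Fin p`) is *circular* if there is an index `i`
with `v i = 0` and `v (i + j) = - v (i - j)` for all `j` with `1 ≤ j ≤ (p-1)/2`,
indices taken modulo `p`. -/
def Circular {p : ℕ} (v : Fin p → ℤ) : Prop :=
  ∃ i : Fin p, v i = 0 ∧
    ∀ j : Fin p, 1 ≤ (j : ℕ) → (j : ℕ) ≤ (p - 1) / 2 → v (i + j) = -v (i - j)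

/-- The forward difference operator `∂f(x) = f(x+1) - f(x)`. -/
def diffOp (f : ℤ → ℤ) : ℤ → ℤ := fun x => f (x + 1) - f x

lemma choose_mod_p (p : ℕ) (hp : p.Prime) :
    ∀ k : ℕ, k ≤ p - 1 → (((p-1).choose k : ℕ) : ZMod p) = (-1)^k := by
  intro k
  induction k with
  | zero => simp
  | succ k ih =>
    intro hk
    have hk' : k ≤ p - 1 := by omega
    have h := Nat.choose_succ_right_eq (p-1) k
    have hcast : (((p-1).choose (k+1) * (k+1) : ℕ) : ZMod p)
        = (((p-1).choose k * (p - 1 - k) : ℕ) : ZMod p) := by rw [h]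
    push_cast at hcast
    rw [ih hk'] at hcast
    have hsub : ((p - 1 - k : ℕ) : ZMod p) = -(k+1) := by
      have : p - 1 - k = p - (k+1) := by omega
      rw [this, Nat.cast_sub (by omega : k + 1 ≤ p)]
      simp
    rw [hsub] at hcast
    have hne : ((k+1 : ℕ) : ZMod p) ≠ 0 := by
      haveI : NeZero p := ⟨hp.pos.ne'⟩
      rw [Ne, ZMod.natCast_eq_zero_iff]
      intro hdvd
      exact absurd (Nat.le_of_dvd (by omega) hdvd) (by omega)
    haveI : Fact p.Prime := ⟨hp⟩
    refine mul_right_cancel₀ hne ?_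
    push_cast
    rw [hcast]; ring

lemma circ_sum_zero (p : ℕ) (hp : p.Prime) (hodd : Odd p) (v : Fin p → ℤ)
    (hc : Circular v) : ∑ k : Fin p, v k = 0 := by
  haveI : NeZero p := ⟨hp.pos.ne'⟩
  obtain ⟨i, hi0, hs⟩ := hc
  have key : ∀ j : Fin p, v (i + j) = -v (i - j) := by
    intro j
    by_cases hj : j = 0
    · simp [hj, hi0]
    · have hjv : 1 ≤ (j : ℕ) := Nat.one_le_iff_ne_zero.mpr
        (fun h => hj (Fin.ext h))
      have hjlt : (j : ℕ) < p := j.isLt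
      by_cases hle : (j : ℕ) ≤ (p - 1) / 2
      · exact hs j hjv hle
      · have hnegval : ((-j : Fin p) : ℕ) = p - (j : ℕ) := by
          rw [Fin.neg_def]
          simp only []
          exact Nat.mod_eq_of_lt (by omega)
        have h1 : 1 ≤ ((-j : Fin p) : ℕ) := by omega
        have h2 : ((-j : Fin p) : ℕ) ≤ (p - 1) / 2 := by
          obtain ⟨m, hm⟩ := hodd
          omega
        have := hs (-j) h1 h2
        rw [sub_neg_eq_add] at this
        rw [← sub_eq_add_neg] at this
        linarith [this]
  have h1 : ∑ k : Fin p, v k = ∑ k : Fin p, v (i + k) :=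
    (Fintype.sum_equiv (Equiv.addLeft i) _ _ (fun k => rfl)).symm
  have h2 : ∑ k : Fin p, v k = ∑ k : Fin p, v (i - k) :=
    (Fintype.sum_equiv (Equiv.subLeft i) _ _ (fun k => rfl)).symm
  have h3 : ∑ k : Fin p, v (i + k) = -∑ k : Fin p, v (i - k) := by
    rw [← Finset.sum_neg_distrib]
    exact Finset.sum_congr rfl (fun k _ => key k)
  have := h1.trans (h3.trans (by rw [← h2]))
  linarith

/-- If `p` is an odd prime and `f : ℤ → ℤ` is `p`-periodic with
`(f 0, …, f (p-1))` circular, then all values of the `(p-1)`-st finite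
difference of `f` lie in `pℤ`. -/
theorem stmt4 (p : ℕ) (hp : p.Prime) (hodd : Odd p)
    (f : ℤ → ℤ) (hper : ∀ x : ℤ, f (x + p) = f x)
    (hcirc : Circular (fun i : Fin p => f ((i : ℕ) : ℤ))) :
    ∀ x : ℤ, (p : ℤ) ∣ (diffOp^[p - 1] f) x := by
  haveI : NeZero p := ⟨hp.pos.ne'⟩
  have hp1 : p - 1 + 1 = p := by have := hp.two_le; omega
  -- sum over one period is shift-invariant
  have hstep : ∀ y : ℤ, (∑ k ∈ Finset.range p, f (y + 1 + k))
      = ∑ k ∈ Finset.range p, f (y + k) := by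
    intro y
    have b := Finset.sum_range_succ' (fun k : ℕ => f (y + k)) p
    rw [Finset.sum_range_succ (fun k : ℕ => f (y + k)) p] at b
    simp only [Nat.cast_add, Nat.cast_one, Nat.cast_zero, add_zero] at b
    rw [hper y] at b
    have hre : ∑ k ∈ Finset.range p, f (y + (k + 1))
        = ∑ k ∈ Finset.range p, f (y + 1 + k) :=
      Finset.sum_congr rfl fun k _ => by ring_nf
    rw [hre] at b
    exact (add_right_cancel b).symm
  have hconst : ∀ y : ℤ, (∑ k ∈ Finset.range p, f (y + k))
      = ∑ k ∈ Finset.range p, f (k : ℤ) := by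
    intro y
    induction y using Int.induction_on with
    | zero => simp
    | succ n ih =>
      rw [← ih]
      have := hstep (n : ℤ)
      convert this using 2
    | pred n ih =>
      rw [← ih]
      have := hstep (-(n : ℤ) - 1)
      have h0 : (-(n : ℤ) - 1) + 1 = -(n : ℤ) := by ring
      rw [h0] at this
      exact this.symm
  -- the sum over one period is zero
  have hsum0 : (∑ k ∈ Finset.range p, f (k : ℤ)) = 0 := by
    have := circ_sum_zero p hp hodd (fun i : Fin p => f ((i : ℕ) : ℤ)) hcirc
    rwa [Fin.sum_univ_eq_sum_range (fun i : ℕ => f (i : ℤ)) p] at this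
  intro x
  rw [← ZMod.intCast_zmod_eq_zero_iff_dvd]
  have hdiff : diffOp = fwdDiff (1 : ℤ) := rfl
  rw [hdiff, fwdDiff_iter_eq_sum_shift]
  simp only [smul_eq_mul, nsmul_eq_mul, mul_one]
  push_cast
  have hterm : ∀ k ∈ Finset.range (p - 1 + 1),
      ((-1 : ZMod p) ^ (p - 1 - k) * ((p-1).choose k : ℕ) * (f (x + k) : ZMod p))
        = (f (x + k) : ZMod p) := by
    intro k hk
    rw [Finset.mem_range] at hk
    have hkle : k ≤ p - 1 := by omega
    rw [choose_mod_p p hp k hkle]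
    have : (-1 : ZMod p) ^ (p - 1 - k) * (-1) ^ k = (-1) ^ (p - 1) := by
      rw [← pow_add]
      congr 1
      omega
    rw [this]
    have hev : Even (p - 1) := by
      obtain ⟨m, hm⟩ := hodd
      exact ⟨m, by omega⟩
    rw [hev.neg_one_pow, one_mul]
  rw [Finset.sum_congr rfl hterm, hp1]
  rw [← Int.cast_sum, hconst x, hsum0, Int.cast_zero]
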